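/- In the MDP of Example 5.1, the supremal expected hitting time satisfies w*(x) = 2 + 2^x for every x ≥ 1 and w*(0) = 0. -/

import Mathlib

/-- Transition kernel of the MDP of Example 5.1 on state space `ℕ` with actions `{1,2}`:
`0` is absorbing; action `1`: `p(0|x,1) = 2^{-x}`, `p(x|x,1) = 1 - 2^{-x}`;
action `2`: `p(0|x,2) = 1/2`, `p(x+1|x,2) = 1/2`. -/
noncomputable def Pkernel (a x y : ℕ) : ℝ :=
  if x = 0 then (if y = 0 then 1 else 0)
  else if a = 1 then
    (if y = 0 then (1/2 : ℝ)^x else if y = x then 1 - (1/2 : ℝ)^x else 0)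
  else (if y = 0 then (1/2 : ℝ) else if y = x + 1 then (1/2 : ℝ) else 0)

/-- A history is a list of (action, resulting state) pairs, most recent first.
`curState x₀ h` is the current state after history `h` starting from `x₀`. -/
def curState (x₀ : ℕ) : List (ℕ × ℕ) → ℕ
  | [] => x₀
  | (_, y) :: _ => y

/-- A (randomized, history-dependent) strategy assigns to the initial state and a history
a probability distribution over actions; `σ x₀ h a` is the probability of action `a`. -/
def IsStrategy (σ : ℕ → List (ℕ × ℕ) → ℕ → ℝ) : Prop :=
  ∀ x₀ h, (∀ a, 0 ≤ σ x₀ h a) ∧ σ x₀ h 1 + σ x₀ h 2 = 1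
    ∧ ∀ a, a ≠ 1 → a ≠ 2 → σ x₀ h a = 0

/-- Probability that the controlled process under `σ` started at `x₀` realizes the
trajectory recorded by the history `h` (most recent pair first). -/
noncomputable def trajProb (σ : ℕ → List (ℕ × ℕ) → ℕ → ℝ) (x₀ : ℕ) :
    List (ℕ × ℕ) → ℝ
  | [] => 1
  | (a, y) :: h => trajProb σ x₀ h * σ x₀ h a * Pkernel a (curState x₀ h) y

/-- `Pne σ x₀ t`: probability that under strategy `σ` started at `x₀` the state at time `t`
is nonzero, i.e. `P^σ_{x₀}(X_t ≠ 0) = P^σ_{x₀}(T₀ > t)`. -/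
noncomputable def Pne (σ : ℕ → List (ℕ × ℕ) → ℕ → ℝ) (x₀ t : ℕ) : ℝ :=
  ∑' h : {h : List (ℕ × ℕ) // h.length = t ∧ curState x₀ h ≠ 0}, trajProb σ x₀ h.1

/-- Expected hitting time of `0`: `E^σ_{x₀}[T₀] = ∑_{t=0}^∞ P^σ_{x₀}(T₀ > t)`. -/
noncomputable def hittingE (σ : ℕ → List (ℕ × ℕ) → ℕ → ℝ) (x₀ : ℕ) : ℝ :=
  ∑' t : ℕ, Pne σ x₀ t

open scoped ENNReal

lemma Pkernel_nonneg (a x y : ℕ) : 0 ≤ Pkernel a x y := by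
  unfold Pkernel
  have h1 : ((1:ℝ)/2)^x ≤ 1 := pow_le_one₀ (by norm_num) (by norm_num)
  split_ifs <;> first | positivity | (norm_num; try linarith [h1])

lemma trajProb_nonneg {σ} (hσ : IsStrategy σ) (x : ℕ) :
    ∀ h, 0 ≤ trajProb σ x h := by
  intro h
  induction h with
  | nil => norm_num [trajProb]
  | cons p h ih =>
    obtain ⟨a, y⟩ := p
    exact mul_nonneg (mul_nonneg ih ((hσ x h).1 a)) (Pkernel_nonneg _ _ _)

noncomputable def ep (a x y : ℕ) : ℝ≥0∞ := ENNReal.ofReal (Pkernel a x y)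

noncomputable def gg (σ : ℕ → List (ℕ × ℕ) → ℕ → ℝ) (x : ℕ) (h : List (ℕ × ℕ)) : ℝ≥0∞ :=
  ENNReal.ofReal (trajProb σ x h)

lemma gg_nil (σ x) : gg σ x [] = 1 := by simp [gg, trajProb]

lemma gg_cons {σ} (hσ : IsStrategy σ) (x a y : ℕ) (h : List (ℕ × ℕ)) :
    gg σ x ((a, y) :: h)
      = gg σ x h * ENNReal.ofReal (σ x h a) * ep a (curState x h) y := by
  unfold gg ep
  rw [show trajProb σ x ((a,y)::h) = trajProb σ x h * σ x h a * Pkernel a (curState x h) y from rfl,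
    ENNReal.ofReal_mul (mul_nonneg (trajProb_nonneg hσ x h) ((hσ x h).1 a)),
    ENNReal.ofReal_mul (trajProb_nonneg hσ x h)]

noncomputable def vv : ℕ → ℝ≥0∞ := fun c => if c = 0 then 0 else ENNReal.ofReal (2 + 2^c)

noncomputable def uu : ℕ → ℝ≥0∞ := fun c => if c = 0 then 0 else 1

lemma vv_ne_top (c : ℕ) : vv c ≠ ⊤ := by
  unfold vv; split_ifs <;> simp
lemma vv_zero : vv 0 = 0 := by simp [vv]
lemma uu_zero : uu 0 = 0 := by simp [uu]

lemma K1 (c : ℕ) (hc : c ≠ 0) :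
    ∑' y : ℕ, ep 1 c y * vv y = ENNReal.ofReal ((1 - (1/2:ℝ)^c) * (2 + 2^c)) := by
  rw [tsum_eq_single c ?_]
  · have h1 : ep 1 c c = ENNReal.ofReal (1 - (1/2:ℝ)^c) := by simp [ep, Pkernel, hc]
    have h2 : vv c = ENNReal.ofReal (2 + 2^c) := by simp [vv, hc]
    rw [h1, h2, ← ENNReal.ofReal_mul (by
      have : ((1:ℝ)/2)^c ≤ 1 := pow_le_one₀ (by norm_num) (by norm_num)
      linarith)]
  · intro y hy
    by_cases hy0 : y = 0
    · subst hy0; simp [vv_zero]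
    · have : Pkernel 1 c y = 0 := by simp [Pkernel, hc, hy0, hy]
      simp [ep, this]

lemma K2 (c : ℕ) (hc : c ≠ 0) (a : ℕ) (ha : a ≠ 1) :
    ∑' y : ℕ, ep a c y * vv y = ENNReal.ofReal (1 + (2:ℝ)^c) := by
  rw [tsum_eq_single (c+1) ?_]
  · have h1 : ep a c (c+1) = ENNReal.ofReal (1/2 : ℝ) := by simp [ep, Pkernel, hc, ha]
    have h2 : vv (c+1) = ENNReal.ofReal (2 + 2^(c+1)) := by simp [vv]
    rw [h1, h2, ← ENNReal.ofReal_mul (by norm_num)]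
    congr 1
    rw [pow_succ]
    ring
  · intro y hy
    by_cases hy0 : y = 0
    · subst hy0; simp [vv_zero]
    · have : Pkernel a c y = 0 := by simp [Pkernel, hc, ha, hy0, hy]
      simp [ep, this]

lemma bellman (c : ℕ) (s : ℕ → ℝ) (hs0 : ∀ a, 0 ≤ s a) (hs : s 1 + s 2 = 1)
    (hz : ∀ a, a ≠ 1 → a ≠ 2 → s a = 0) :
    uu c + ∑' a : ℕ, ENNReal.ofReal (s a) * (∑' y : ℕ, ep a c y * vv y) ≤ vv c := by
  by_cases hc : c = 0
  · subst hc
    have h1 : ∀ a : ℕ, (∑' y : ℕ, ep a 0 y * vv y) = 0 := by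
      intro a
      have hz' : ∀ y : ℕ, ep a 0 y * vv y = 0 := by
        intro y
        by_cases hy : y = 0
        · subst hy; simp [vv_zero]
        · simp [ep, Pkernel, hy]
      simp [hz']
    simp [uu_zero, vv_zero, h1]
  · have hsum : ∑' a : ℕ, ENNReal.ofReal (s a) * (∑' y : ℕ, ep a c y * vv y)
        = ENNReal.ofReal (s 1) * (∑' y : ℕ, ep 1 c y * vv y)
          + ENNReal.ofReal (s 2) * (∑' y : ℕ, ep 2 c y * vv y) := by
      rw [tsum_eq_sum (s := ({1, 2} : Finset ℕ)) ?_]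
      · rw [Finset.sum_pair (by norm_num : (1:ℕ) ≠ 2)]
      · intro a ha
        have h1 : a ≠ 1 := by intro h; subst h; simp at ha
        have h2 : a ≠ 2 := by intro h; subst h; simp at ha
        rw [hz a h1 h2]
        simp
    rw [hsum, K1 c hc, K2 c hc 2 (by norm_num)]
    set A := ENNReal.ofReal (s 1) with hA
    set B := ENNReal.ofReal (s 2) with hB
    have hAB : A + B = 1 := by
      rw [hA, hB, ← ENNReal.ofReal_add (hs0 1) (hs0 2), hs, ENNReal.ofReal_one]
    have huu : uu c = 1 := by simp [uu, hc]
    have hvv : vv c = ENNReal.ofReal (2 + 2^c) := by simp [vv, hc]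
    have hpow : ((1:ℝ)/2)^c * 2^c = 1 := by
      rw [← mul_pow]; norm_num
    have hpnn : (0:ℝ) ≤ ((1:ℝ)/2)^c := by positivity
    have hqnn : (0:ℝ) ≤ 2 + (2:ℝ)^c := by positivity
    have hple : ((1:ℝ)/2)^c ≤ 1 := pow_le_one₀ (by norm_num) (by norm_num)
    have h1 : (1 : ℝ≥0∞) + ENNReal.ofReal ((1 - (1/2:ℝ)^c) * (2 + 2^c)) ≤ vv c := by
      rw [hvv, ← ENNReal.ofReal_one,
        ← ENNReal.ofReal_add (by norm_num) (mul_nonneg (by linarith) hqnn)]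
      exact ENNReal.ofReal_le_ofReal (by nlinarith [hpow, hpnn])
    have h2 : (1 : ℝ≥0∞) + ENNReal.ofReal (1 + (2:ℝ)^c) ≤ vv c := by
      rw [hvv, ← ENNReal.ofReal_one, ← ENNReal.ofReal_add (by norm_num) (by positivity)]
      exact ENNReal.ofReal_le_ofReal (by linarith)
    calc uu c + (A * ENNReal.ofReal ((1 - (1/2:ℝ)^c) * (2 + 2^c))
            + B * ENNReal.ofReal (1 + (2:ℝ)^c))
        = A * (1 + ENNReal.ofReal ((1 - (1/2:ℝ)^c) * (2 + 2^c)))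
            + B * (1 + ENNReal.ofReal (1 + (2:ℝ)^c)) := by
          have expand : A * (1 + ENNReal.ofReal ((1 - (1/2:ℝ)^c) * (2 + 2^c)))
              + B * (1 + ENNReal.ofReal (1 + (2:ℝ)^c))
            = (A + B) + (A * ENNReal.ofReal ((1 - (1/2:ℝ)^c) * (2 + 2^c))
              + B * ENNReal.ofReal (1 + (2:ℝ)^c)) := by ring
          rw [expand, hAB, huu]
      _ ≤ A * vv c + B * vv c := add_le_add (mul_le_mul_right h1 A) (mul_le_mul_right h2 B)
      _ = (A + B) * vv c := (add_mul A B (vv c)).symm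
      _ = vv c := by rw [hAB, one_mul]
noncomputable def SS (σ : ℕ → List (ℕ × ℕ) → ℕ → ℝ) (x t : ℕ) : ℝ≥0∞ :=
  ∑' h : List (ℕ × ℕ), if h.length = t then gg σ x h * vv (curState x h) else 0

noncomputable def PP (σ : ℕ → List (ℕ × ℕ) → ℕ → ℝ) (x t : ℕ) : ℝ≥0∞ :=
  ∑' h : List (ℕ × ℕ), if h.length = t then gg σ x h * uu (curState x h) else 0

lemma SS_zero (σ : ℕ → List (ℕ × ℕ) → ℕ → ℝ) (x : ℕ) : SS σ x 0 = vv x := by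
  unfold SS
  rw [tsum_eq_single ([] : List (ℕ × ℕ)) ?_]
  · simp [gg_nil]
    rfl
  · intro h hne
    rw [if_neg (fun hl => hne (List.length_eq_zero_iff.mp hl))]

lemma step {σ} (hσ : IsStrategy σ) (x t : ℕ) : PP σ x t + SS σ x (t+1) ≤ SS σ x t := by
  classical
  have hinj : Function.Injective (fun p : (ℕ×ℕ) × List (ℕ×ℕ) => p.1 :: p.2) := by
    intro p q hpq
    simp only [List.cons.injEq] at hpq
    exact Prod.ext hpq.1 hpq.2
  have hsupp : Function.support
      (fun h : List (ℕ×ℕ) => if h.length = t+1 then gg σ x h * vv (curState x h) else 0)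
      ⊆ Set.range (fun p : (ℕ×ℕ) × List (ℕ×ℕ) => p.1 :: p.2) := by
    intro h hh
    match h with
    | [] => exact absurd (if_neg (by simp)) hh
    | p :: h' => exact ⟨(p, h'), rfl⟩
  have e1 : SS σ x (t+1)
      = ∑' p : (ℕ×ℕ) × List (ℕ×ℕ),
          (if (p.1 :: p.2).length = t+1 then gg σ x (p.1 :: p.2) * vv (curState x (p.1 :: p.2)) else 0) :=
    (hinj.tsum_eq hsupp).symm
  have e2 : SS σ x (t+1)
      = ∑' h' : List (ℕ×ℕ), ∑' ay : ℕ×ℕ,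
          (if (ay :: h').length = t+1 then gg σ x (ay :: h') * vv (curState x (ay :: h')) else 0) := by
    rw [e1]
    have ep2 : (∑' p : (ℕ×ℕ) × List (ℕ×ℕ),
        (if (p.1 :: p.2).length = t+1 then gg σ x (p.1 :: p.2) * vv (curState x (p.1 :: p.2)) else 0))
        = ∑' ay : ℕ×ℕ, ∑' h' : List (ℕ×ℕ),
          (if (ay :: h').length = t+1 then gg σ x (ay :: h') * vv (curState x (ay :: h')) else 0) :=
      ENNReal.tsum_prod (f := fun (ay : ℕ×ℕ) (h' : List (ℕ×ℕ)) =>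
        if (ay :: h').length = t+1 then gg σ x (ay :: h') * vv (curState x (ay :: h')) else 0)
    rw [ep2]
    exact ENNReal.tsum_comm
  have e3 : ∀ h' : List (ℕ×ℕ), (∑' ay : ℕ×ℕ,
      (if (ay :: h').length = t+1 then gg σ x (ay :: h') * vv (curState x (ay :: h')) else 0))
      = (if h'.length = t then
          gg σ x h' * ∑' a : ℕ, ENNReal.ofReal (σ x h' a)
            * (∑' y : ℕ, ep a (curState x h') y * vv y)
        else 0) := by
    intro h'
    by_cases hl : h'.length = t
    · rw [if_pos hl]
      have ep3 : (∑' ay : ℕ×ℕ,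
          (if (ay :: h').length = t+1 then gg σ x (ay :: h') * vv (curState x (ay :: h')) else 0))
          = ∑' a : ℕ, ∑' y : ℕ,
            (if ((a,y) :: h').length = t+1 then gg σ x ((a,y) :: h') * vv (curState x ((a,y) :: h')) else 0) :=
        ENNReal.tsum_prod (f := fun (a y : ℕ) =>
          if ((a,y) :: h').length = t+1 then gg σ x ((a,y) :: h') * vv (curState x ((a,y) :: h')) else 0)
      rw [ep3]
      have key : ∀ a y : ℕ,
          (if ((a,y) :: h').length = t+1 then gg σ x ((a,y) :: h') * vv (curState x ((a,y) :: h')) else 0)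
          = (gg σ x h' * ENNReal.ofReal (σ x h' a)) * (ep a (curState x h') y * vv y) := by
        intro a y
        rw [if_pos (by simp [hl])]
        rw [gg_cons hσ]
        show gg σ x h' * ENNReal.ofReal (σ x h' a) * ep a (curState x h') y * vv y = _
        ring
      calc (∑' a : ℕ, ∑' y : ℕ,
            (if ((a,y) :: h').length = t+1 then gg σ x ((a,y) :: h') * vv (curState x ((a,y) :: h')) else 0))
          = ∑' a : ℕ, ∑' y : ℕ,
              (gg σ x h' * ENNReal.ofReal (σ x h' a)) * (ep a (curState x h') y * vv y) :=
            tsum_congr fun a => tsum_congr fun y => key a y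
        _ = ∑' a : ℕ, (gg σ x h' * ENNReal.ofReal (σ x h' a))
              * (∑' y : ℕ, ep a (curState x h') y * vv y) :=
            tsum_congr fun a => ENNReal.tsum_mul_left
        _ = ∑' a : ℕ, gg σ x h' * (ENNReal.ofReal (σ x h' a)
              * (∑' y : ℕ, ep a (curState x h') y * vv y)) :=
            tsum_congr fun a => by ring
        _ = gg σ x h' * ∑' a : ℕ, ENNReal.ofReal (σ x h' a)
              * (∑' y : ℕ, ep a (curState x h') y * vv y) := ENNReal.tsum_mul_left
    · rw [if_neg hl]
      have : ∀ ay : ℕ×ℕ,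
          (if (ay :: h').length = t+1 then gg σ x (ay :: h') * vv (curState x (ay :: h')) else 0) = 0 := by
        intro ay
        rw [if_neg (by simp [hl])]
      exact (tsum_congr this).trans tsum_zero
  rw [e2]
  unfold PP SS
  rw [← ENNReal.tsum_add]
  refine ENNReal.tsum_le_tsum fun h' => ?_
  rw [e3 h']
  by_cases hl : h'.length = t
  · rw [if_pos hl, if_pos hl, if_pos hl, ← mul_add]
    refine mul_le_mul_right ?_ _
    exact bellman (curState x h') (σ x h') (hσ x h').1 (hσ x h').2.1 (hσ x h').2.2
  · rw [if_neg hl, if_neg hl, if_neg hl, add_zero]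

lemma telescope {σ} (hσ : IsStrategy σ) (x : ℕ) :
    ∀ m, (∑ t ∈ Finset.range m, PP σ x t) + SS σ x m ≤ SS σ x 0 := by
  intro m
  induction m with
  | zero => simp
  | succ m ih =>
    calc (∑ t ∈ Finset.range (m+1), PP σ x t) + SS σ x (m+1)
        = (∑ t ∈ Finset.range m, PP σ x t) + (PP σ x m + SS σ x (m+1)) := by
          rw [Finset.sum_range_succ, add_assoc]
      _ ≤ (∑ t ∈ Finset.range m, PP σ x t) + SS σ x m := add_le_add_right (step hσ x m) _
      _ ≤ SS σ x 0 := ih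

lemma PP_tsum_le {σ} (hσ : IsStrategy σ) (x : ℕ) : ∑' t : ℕ, PP σ x t ≤ vv x := by
  refine Summable.tsum_le_of_sum_range_le ENNReal.summable fun n => ?_
  calc ∑ t ∈ Finset.range n, PP σ x t ≤ (∑ t ∈ Finset.range n, PP σ x t) + SS σ x n :=
        le_self_add
    _ ≤ SS σ x 0 := telescope hσ x n
    _ = vv x := SS_zero σ x

lemma PP_ne_top {σ} (hσ : IsStrategy σ) (x t : ℕ) : PP σ x t ≠ ⊤ :=
  ne_top_of_le_ne_top (vv_ne_top x) (le_trans (ENNReal.le_tsum t) (PP_tsum_le hσ x))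
lemma Pne_eq {σ} (hσ : IsStrategy σ) (x t : ℕ) : Pne σ x t = (PP σ x t).toReal := by
  unfold Pne
  have h1 : ∀ h : {h : List (ℕ × ℕ) // h.length = t ∧ curState x h ≠ 0},
      trajProb σ x h.1 = (ENNReal.ofReal (trajProb σ x h.1)).toReal :=
    fun h => (ENNReal.toReal_ofReal (trajProb_nonneg hσ x h.1)).symm
  rw [tsum_congr h1, ← ENNReal.tsum_toReal_eq (fun _ => ENNReal.ofReal_ne_top)]
  congr 1
  calc (∑' h : {h : List (ℕ × ℕ) // h.length = t ∧ curState x h ≠ 0},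
        ENNReal.ofReal (trajProb σ x h.1))
      = ∑' h : List (ℕ × ℕ),
          Set.indicator {h : List (ℕ × ℕ) | h.length = t ∧ curState x h ≠ 0}
            (fun h => ENNReal.ofReal (trajProb σ x h)) h :=
        tsum_subtype {h : List (ℕ × ℕ) | h.length = t ∧ curState x h ≠ 0}
          (fun h => ENNReal.ofReal (trajProb σ x h))
    _ = PP σ x t := by
        refine tsum_congr fun h => ?_
        by_cases h1 : h.length = t <;> by_cases h2 : curState x h = 0 <;>
          simp [Set.indicator_apply, Set.mem_setOf_eq, h1, h2, uu, gg]

lemma upper {σ} (hσ : IsStrategy σ) (x : ℕ) (hx : x ≠ 0) :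
    hittingE σ x ≤ 2 + 2^x := by
  unfold hittingE
  rw [tsum_congr (fun t => Pne_eq hσ x t),
    ← ENNReal.tsum_toReal_eq (fun t => PP_ne_top hσ x t)]
  have hm := ENNReal.toReal_mono (vv_ne_top x) (PP_tsum_le hσ x)
  have hv : (vv x).toReal = 2 + 2^x := by
    rw [vv]
    rw [if_neg hx, ENNReal.toReal_ofReal (by positivity)]
  rwa [hv] at hm
lemma trajProb_cons (σ : ℕ → List (ℕ × ℕ) → ℕ → ℝ) (x₀ a y : ℕ) (h : List (ℕ × ℕ)) :
    trajProb σ x₀ ((a, y) :: h) = trajProb σ x₀ h * σ x₀ h a * Pkernel a (curState x₀ h) y := rfl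

lemma curState_cons (x₀ a y : ℕ) (h : List (ℕ × ℕ)) :
    curState x₀ ((a, y) :: h) = y := rfl

/-! ### The `x = 0` case -/

lemma traj_zero (σ : ℕ → List (ℕ × ℕ) → ℕ → ℝ) :
    ∀ h, curState 0 h ≠ 0 → trajProb σ 0 h = 0 := by
  intro h
  induction h with
  | nil => intro hc; exact absurd rfl hc
  | cons p h' ih =>
    obtain ⟨a, y⟩ := p
    intro hc
    rw [curState_cons] at hc
    rw [trajProb_cons]
    by_cases h0 : curState 0 h' = 0
    · rw [h0]
      have hk : Pkernel a 0 y = 0 := by simp [Pkernel, hc]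
      rw [hk, mul_zero]
    · rw [ih h0]; ring

lemma Pne_zero (σ : ℕ → List (ℕ × ℕ) → ℕ → ℝ) (t : ℕ) : Pne σ 0 t = 0 := by
  unfold Pne
  have h : ∀ h : {h : List (ℕ × ℕ) // h.length = t ∧ curState 0 h ≠ 0},
      trajProb σ 0 h.1 = 0 := fun h => traj_zero σ h.1 h.2.2
  rw [tsum_congr h, tsum_zero]

lemma hittingE_zero (σ : ℕ → List (ℕ × ℕ) → ℕ → ℝ) : hittingE σ 0 = 0 := by
  unfold hittingE
  rw [tsum_congr (Pne_zero σ), tsum_zero]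

/-! ### The lower-bound strategies -/

noncomputable def phi (x n : ℕ) : ℕ → List (ℕ × ℕ) → ℕ → ℝ := fun x₀ h a =>
  if curState x₀ h ≤ x + n then (if a = 2 then 1 else 0) else (if a = 1 then 1 else 0)

lemma phi_strategy (x n : ℕ) : IsStrategy (phi x n) := by
  intro x₀ h
  refine ⟨fun a => ?_, ?_, fun a h1 h2 => ?_⟩ <;> unfold phi <;> split_ifs <;> simp_all

def Hh (x n : ℕ) : ℕ → List (ℕ × ℕ)
  | 0 => []
  | (t+1) => (if t ≤ n then 2 else 1, x + min (t+1) (n+1)) :: Hh x n t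

lemma Hh_length (x n t : ℕ) : (Hh x n t).length = t := by
  induction t with
  | zero => rfl
  | succ t ih => simp [Hh, ih]

lemma curH (x n t : ℕ) : curState x (Hh x n t) = x + min t (n+1) := by
  cases t with
  | zero => simp [Hh, curState]
  | succ t => rfl

lemma trajH (x n : ℕ) (hx : 1 ≤ x) (t : ℕ) :
    trajProb (phi x n) x (Hh x n t)
      = (1/2:ℝ)^(min t (n+1)) * (1 - (1/2:ℝ)^(x+n+1))^(t - (n+1)) := by
  induction t with
  | zero => simp [Hh, trajProb]
  | succ t ih =>
    by_cases htn : t ≤ n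
    · have hmin : min t (n+1) = t := by omega
      have hmin1 : min (t+1) (n+1) = t+1 := by omega
      simp only [Hh]
      rw [if_pos htn, trajProb_cons, ih, curH]
      have hphi : phi x n x (Hh x n t) 2 = 1 := by
        unfold phi; rw [curH, hmin, if_pos (by omega), if_pos rfl]
      have hpk : Pkernel 2 (x + min t (n+1)) (x + min (t+1) (n+1)) = 1/2 := by
        rw [hmin, hmin1]; unfold Pkernel
        rw [if_neg (by omega), if_neg (by norm_num), if_neg (by omega),
          if_pos (by omega : x + (t+1) = x + t + 1)]
      rw [hphi, hpk, hmin, hmin1]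
      have h1 : (t+1) - (n+1) = 0 := by omega
      have h2 : t - (n+1) = 0 := by omega
      rw [h1, h2, pow_zero]
      ring
    · have hmin : min t (n+1) = n+1 := by omega
      have hmin1 : min (t+1) (n+1) = n+1 := by omega
      simp only [Hh]
      rw [if_neg htn, trajProb_cons, ih, curH]
      have hphi : phi x n x (Hh x n t) 1 = 1 := by
        unfold phi; rw [curH, hmin, if_neg (by omega), if_pos rfl]
      have hpk : Pkernel 1 (x + min t (n+1)) (x + min (t+1) (n+1))
          = 1 - (1/2:ℝ)^(x+n+1) := by
        rw [hmin, hmin1]; unfold Pkernel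
        rw [if_neg (by omega), if_pos rfl, if_neg (by omega), if_pos rfl]
        rw [show x + (n+1) = x+n+1 from by omega]
      rw [hphi, hpk, hmin, hmin1]
      have hsub : (t+1) - (n+1) = (t - (n+1)) + 1 := by omega
      rw [hsub, pow_succ]
      ring

lemma uniq (x n : ℕ) (hx : 1 ≤ x) :
    ∀ h : List (ℕ × ℕ), trajProb (phi x n) x h ≠ 0 → curState x h ≠ 0 →
      h = Hh x n h.length := by
  intro h
  induction h with
  | nil => intro _ _; rfl
  | cons p h' ih =>
    obtain ⟨a, y⟩ := p
    intro htr hcur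
    rw [trajProb_cons] at htr
    have h1 : trajProb (phi x n) x h' ≠ 0 := fun e => htr (by rw [e]; ring)
    have h2 : phi x n x h' a ≠ 0 := fun e => htr (by rw [e]; ring)
    have h3 : Pkernel a (curState x h') y ≠ 0 := fun e => htr (by rw [e]; ring)
    have hy : y ≠ 0 := by rwa [curState_cons] at hcur
    have hc : curState x h' ≠ 0 := by
      intro e
      apply h3
      rw [e]
      simp [Pkernel, hy]
    have hh' := ih h1 hc
    set t := h'.length with ht
    have hcur' : curState x h' = x + min t (n+1) := by rw [hh']; exact curH x n t
    have hlen : ((a, y) :: h').length = t + 1 := by simp [ht]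
    rw [hlen, hh']
    by_cases htn : t ≤ n
    · have hmin : min t (n+1) = t := by omega
      have ha : a = 2 := by
        by_contra hne
        apply h2
        unfold phi
        rw [hcur', hmin, if_pos (by omega), if_neg hne]
      subst ha
      have hx0 : x + t ≠ 0 := by omega
      have hyv : y = x + t + 1 := by
        by_contra hne
        apply h3
        rw [hcur', hmin]
        simp [Pkernel, hx0, hy, hne]
      subst hyv
      simp only [Hh]
      rw [if_pos htn, show x + min (t+1) (n+1) = x + t + 1 from by omega]
    · have hmin : min t (n+1) = n+1 := by omega
      have ha : a = 1 := by
        by_contra hne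
        apply h2
        unfold phi
        rw [hcur', hmin, if_neg (by omega), if_neg hne]
      subst ha
      have hx0 : x + (n+1) ≠ 0 := by omega
      have hyv : y = x + (n+1) := by
        by_contra hne
        apply h3
        rw [hcur', hmin]
        simp [Pkernel, hx0, hy, hne]
      subst hyv
      simp only [Hh]
      rw [if_neg htn, show x + min (t+1) (n+1) = x + (n+1) from by omega]

lemma Pne_phi (x n : ℕ) (hx : 1 ≤ x) (t : ℕ) :
    Pne (phi x n) x t = (1/2:ℝ)^(min t (n+1)) * (1 - (1/2:ℝ)^(x+n+1))^(t - (n+1)) := by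
  unfold Pne
  have hmem : (Hh x n t).length = t ∧ curState x (Hh x n t) ≠ 0 :=
    ⟨Hh_length x n t, by rw [curH]; omega⟩
  rw [tsum_eq_single
    (⟨Hh x n t, hmem⟩ : {h : List (ℕ × ℕ) // h.length = t ∧ curState x h ≠ 0}) ?_]
  · exact trajH x n hx t
  · rintro ⟨h, hlen, hcur⟩ hne
    by_contra htr
    refine hne (Subtype.ext ?_)
    show h = Hh x n t
    rw [← hlen]
    exact uniq x n hx h htr hcur

lemma hittingE_phi (x n : ℕ) (hx : 1 ≤ x) :
    hittingE (phi x n) x = 2 + 2^x - (1/2:ℝ)^n := by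
  unfold hittingE
  set q : ℝ := 1 - (1/2:ℝ)^(x+n+1) with hq
  have hq0 : 0 ≤ q := by
    have : ((1:ℝ)/2)^(x+n+1) ≤ 1 := pow_le_one₀ (by norm_num) (by norm_num)
    rw [hq]; linarith
  have hq1 : q < 1 := by
    have : 0 < ((1:ℝ)/2)^(x+n+1) := by positivity
    rw [hq]; linarith
  have hfun : ∀ t, Pne (phi x n) x t = (1/2:ℝ)^(min t (n+1)) * q^(t - (n+1)) :=
    fun t => Pne_phi x n hx t
  rw [tsum_congr hfun]
  set f : ℕ → ℝ := fun t => (1/2:ℝ)^(min t (n+1)) * q^(t - (n+1)) with hf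
  have hshift : ∀ s : ℕ, f (s + (n+1)) = (1/2:ℝ)^(n+1) * q^s := by
    intro s
    have h1 : min (s + (n+1)) (n+1) = n+1 := by omega
    have h2 : s + (n+1) - (n+1) = s := by omega
    simp only [hf, h1, h2]
  have hsum_tail : Summable (fun s => f (s + (n+1))) :=
    (((summable_geometric_of_lt_one hq0 hq1).mul_left ((1/2:ℝ)^(n+1))).congr
      (fun s => (hshift s).symm))
  have hsum : Summable f := (summable_nat_add_iff (n+1)).mp hsum_tail
  rw [← Summable.sum_add_tsum_nat_add (n+1) hsum]
  have hhead : ∑ t ∈ Finset.range (n+1), f t = 2 - (1/2:ℝ)^n := by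
    have e0 : ∑ t ∈ Finset.range (n+1), f t = ∑ t ∈ Finset.range (n+1), ((1/2:ℝ))^t := by
      refine Finset.sum_congr rfl fun t htm => ?_
      rw [Finset.mem_range] at htm
      have h1 : min t (n+1) = t := by omega
      have h2 : t - (n+1) = 0 := by omega
      simp only [hf, h1, h2, pow_zero, mul_one]
    rw [e0, geom_sum_eq (by norm_num : (1/2:ℝ) ≠ 1),
      div_eq_iff (by norm_num : (1/2:ℝ) - 1 ≠ 0), pow_succ]
    ring
  have htail : ∑' s : ℕ, f (s + (n+1)) = (1/2:ℝ)^(n+1) * (1 - q)⁻¹ := by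
    rw [tsum_congr hshift, tsum_mul_left, tsum_geometric_of_lt_one hq0 hq1]
  have h1q : (1 : ℝ) - q = (1/2:ℝ)^(x+n+1) := by rw [hq]; ring
  have hinv : (((1/2:ℝ))^(x+n+1))⁻¹ = 2^(x+n+1) := by
    rw [one_div, inv_pow, inv_inv]
  have e2 : ((1/2:ℝ))^(n+1) * 2^(x+n+1) = 2^x := by
    have hmp : ((1:ℝ)/2)^(n+1) * 2^(n+1) = 1 := by rw [← mul_pow]; norm_num
    have hsplit : (2:ℝ)^(x+n+1) = 2^(n+1) * 2^x := by
      rw [← pow_add]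
      congr 1
      omega
    rw [hsplit, ← mul_assoc, hmp, one_mul]
  rw [hhead, htail, h1q, hinv, e2]
  ring
instance : Nonempty {σ : ℕ → List (ℕ × ℕ) → ℕ → ℝ // IsStrategy σ} :=
  ⟨⟨phi 0 0, phi_strategy 0 0⟩⟩


/-- In the MDP of Example 5.1, the supremal expected hitting time over all strategies
satisfies `w*(x) = 2 + 2^x` for every `x ≥ 1`, and `w*(0) = 0`. -/
theorem sup_expected_hitting_time :
    (∀ x : ℕ, 1 ≤ x →
        (⨆ σ : {σ : ℕ → List (ℕ × ℕ) → ℕ → ℝ // IsStrategy σ}, hittingE σ.1 x)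
          = 2 + 2^x)
      ∧ (⨆ σ : {σ : ℕ → List (ℕ × ℕ) → ℕ → ℝ // IsStrategy σ}, hittingE σ.1 0) = 0 := by
  constructor
  · intro x hx
    have hx0 : x ≠ 0 := by omega
    apply le_antisymm
    · exact ciSup_le fun σ => upper σ.2 x hx0
    · have hbdd : BddAbove
          (Set.range fun σ : {σ : ℕ → List (ℕ × ℕ) → ℕ → ℝ // IsStrategy σ} =>
            hittingE σ.1 x) := by
        refine ⟨2 + 2^x, ?_⟩
        rintro r ⟨σ, rfl⟩
        exact upper σ.2 x hx0
      refine le_of_forall_pos_le_add fun ε hε => ?_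
      obtain ⟨n, hn⟩ := exists_pow_lt_of_lt_one hε (by norm_num : (1:ℝ)/2 < 1)
      have hle : hittingE (phi x n) x
          ≤ ⨆ σ : {σ : ℕ → List (ℕ × ℕ) → ℕ → ℝ // IsStrategy σ}, hittingE σ.1 x :=
        le_ciSup hbdd ⟨phi x n, phi_strategy x n⟩
      rw [hittingE_phi x n hx] at hle
      linarith
  · have hall : ∀ σ : {σ : ℕ → List (ℕ × ℕ) → ℕ → ℝ // IsStrategy σ},
        hittingE σ.1 0 = 0 := fun σ => hittingE_zero σ.1
    rw [iSup_congr hall]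
    exact ciSup_const
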